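/- Generalized Dodgson (Jacobi's identity for complementary minors, special case): for an invertible n × n matrix A over a field, det(A^{-1}[{1,n},{1,n}]) · det(A)² = det(A[2..n−1,2..n−1]) · det(A), equivalently the 2×2 minor of the adjugate adj(A) on rows and columns {1, n} equals det(A) · det(A[2..n−1,2..n−1]); Dodgson's rule follows by expanding that 2×2 minor of the adjugate as a product of cofactors. -/

import Mathlib

/-- Embedding of `Fin (n-2)` into `Fin n` keeping the middle indices `1,…,n-2`. -/
def mid {n : ℕ} (i : Fin (n - 2)) : Fin n := ⟨i + 1, by have := i.isLt; omega⟩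

/-- The two extreme indices `1` and `n` of `{1,…,n}` (as `Fin n`), for `n ≥ 3`. -/
def ends {n : ℕ} (hn : 3 ≤ n) : Fin 2 → Fin n :=
  ![⟨0, by omega⟩, ⟨n - 1, by omega⟩]

lemma ends_injective {n : ℕ} (hn : 3 ≤ n) : Function.Injective (ends hn) := by
  intro a b hab
  fin_cases a <;> fin_cases b <;> simp_all [ends, Fin.ext_iff] <;> omega

lemma mid_injective {n : ℕ} : Function.Injective (mid (n := n)) := by
  intro a b hab
  simp [mid, Fin.ext_iff] at hab ⊢
  omega

lemma mid_ne_ends {n : ℕ} (hn : 3 ≤ n) (i : Fin (n - 2)) (k : Fin 2) :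
    mid i ≠ ends hn k := by
  have := i.isLt
  fin_cases k <;> simp [mid, ends, Fin.ext_iff] <;> omega

lemma sumElim_bijective {n : ℕ} (hn : 3 ≤ n) :
    Function.Bijective (Sum.elim (ends hn) (mid (n := n))) := by
  rw [Fintype.bijective_iff_injective_and_card]
  constructor
  · intro a b hab
    cases a with
    | inl a => cases b with
      | inl b => simpa using ends_injective hn (by simpa using hab)
      | inr b => exact absurd hab.symm (mid_ne_ends hn b a)
    | inr a => cases b with
      | inl b => exact absurd hab (mid_ne_ends hn a b)
      | inr b => simpa using mid_injective (by simpa using hab)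
  · simp; omega

/-- Jacobi's identity for complementary minors, in the special case giving Dodgson's
rule: for an invertible matrix `A`, the `2 × 2` minor of `A⁻¹` on rows and columns
`{1, n}` times `det(A)²` equals `det` of the inner submatrix times `det A`;
equivalently, the `2 × 2` minor of the adjugate on rows and columns `{1, n}` equals
`det A` times the determinant of the inner submatrix. -/
theorem jacobi_complementary {K : Type*} [Field K] {n : ℕ} (hn : 3 ≤ n)
    (A : Matrix (Fin n) (Fin n) K) (hA : IsUnit A.det) :
    (A⁻¹.submatrix (ends hn) (ends hn)).det * A.det ^ 2 =
        (A.submatrix mid mid).det * A.det ∧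
      (A.adjugate.submatrix (ends hn) (ends hn)).det =
        A.det * (A.submatrix mid mid).det := by
  classical
  set σ : (Fin 2 ⊕ Fin (n - 2)) ≃ Fin n :=
    Equiv.ofBijective _ (sumElim_bijective hn) with hσ
  have hσapp : ∀ x, σ x = Sum.elim (ends hn) (mid (n := n)) x := fun _ => rfl
  -- X: identity with columns `ends hn 0` and `ends hn 1` replaced by those of A⁻¹
  set X : Matrix (Fin n) (Fin n) K :=
    fun i j => if j = ends hn 0 ∨ j = ends hn 1 then A⁻¹ i j
      else (1 : Matrix (Fin n) (Fin n) K) i j with hXdef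
  have hXapp : ∀ i j, X i j = (if j = ends hn 0 ∨ j = ends hn 1 then A⁻¹ i j
      else (1 : Matrix (Fin n) (Fin n) K) i j) := fun _ _ => rfl
  have hXsub : X.submatrix σ σ =
      Matrix.fromBlocks (A⁻¹.submatrix (ends hn) (ends hn)) 0
        (A⁻¹.submatrix (mid (n := n)) (ends hn)) 1 := by
    ext i j
    cases i <;> cases j <;>
      simp only [Matrix.submatrix_apply, hσapp, Sum.elim_inl, Sum.elim_inr,
        Matrix.fromBlocks_apply₁₁, Matrix.fromBlocks_apply₁₂,
        Matrix.fromBlocks_apply₂₁, Matrix.fromBlocks_apply₂₂, hXapp]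
    · rename_i a b
      have : ends hn b = ends hn 0 ∨ ends hn b = ends hn 1 := by
        fin_cases b <;> simp
      simp [this]
    · rename_i a b
      have h0 : mid b ≠ ends hn 0 := mid_ne_ends hn b 0
      have h1 : mid b ≠ ends hn 1 := mid_ne_ends hn b 1
      have h2 : ends hn a ≠ mid b := fun h => (mid_ne_ends hn b a) h.symm
      simp [h0, h1, Matrix.one_apply, h2]
    · rename_i a b
      have : ends hn b = ends hn 0 ∨ ends hn b = ends hn 1 := by
        fin_cases b <;> simp
      simp [this]
    · rename_i a b
      have h0 : mid b ≠ ends hn 0 := mid_ne_ends hn b 0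
      have h1 : mid b ≠ ends hn 1 := mid_ne_ends hn b 1
      simp [h0, h1, Matrix.one_apply, mid_injective.eq_iff]
  have hXdet : X.det = (A⁻¹.submatrix (ends hn) (ends hn)).det := by
    rw [← Matrix.det_submatrix_equiv_self σ X, hXsub,
      Matrix.det_fromBlocks_zero₁₂]
    simp
  -- A * X
  have hAX : ∀ i j, (A * X) i j =
      if j = ends hn 0 ∨ j = ends hn 1 then (1 : Matrix (Fin n) (Fin n) K) i j
      else A i j := by
    intro i j
    by_cases h : j = ends hn 0 ∨ j = ends hn 1
    · have : (A * X) i j = (A * A⁻¹) i j := by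
        simp only [Matrix.mul_apply, hXapp, h, if_pos]
      rw [this, Matrix.mul_nonsing_inv A hA, if_pos h]
    · rw [if_neg h]
      simp only [Matrix.mul_apply, hXapp, h, if_neg, Matrix.one_apply]
      simp [mul_ite]
  have hAXsub : (A * X).submatrix σ σ =
      Matrix.fromBlocks 1 (A.submatrix (ends hn) (mid (n := n))) 0
        (A.submatrix (mid (n := n)) (mid (n := n))) := by
    ext i j
    cases i <;> cases j <;>
      simp only [Matrix.submatrix_apply, hσapp, Sum.elim_inl, Sum.elim_inr,
        Matrix.fromBlocks_apply₁₁, Matrix.fromBlocks_apply₁₂,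
        Matrix.fromBlocks_apply₂₁, Matrix.fromBlocks_apply₂₂, hAX]
    · rename_i a b
      fin_cases a <;> fin_cases b <;>
        simp [Matrix.one_apply, ends, Fin.ext_iff] <;> omega
    · rename_i a b
      have h0 : mid b ≠ ends hn 0 := mid_ne_ends hn b 0
      have h1 : mid b ≠ ends hn 1 := mid_ne_ends hn b 1
      simp [h0, h1]
    · rename_i a b
      have : ends hn b = ends hn 0 ∨ ends hn b = ends hn 1 := by
        fin_cases b <;> simp
      have h2 : mid a ≠ ends hn b := mid_ne_ends hn a b
      simp [this, Matrix.one_apply, h2]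
    · rename_i a b
      have h0 : mid b ≠ ends hn 0 := mid_ne_ends hn b 0
      have h1 : mid b ≠ ends hn 1 := mid_ne_ends hn b 1
      simp [h0, h1]
  have hAXdet : (A * X).det = (A.submatrix mid mid).det := by
    rw [← Matrix.det_submatrix_equiv_self σ (A * X), hAXsub,
      Matrix.det_fromBlocks_zero₂₁]
    simp
  have key : A.det * (A⁻¹.submatrix (ends hn) (ends hn)).det =
      (A.submatrix mid mid).det := by
    rw [← hXdet, ← Matrix.det_mul, hAXdet]
  have hdet0 : A.det ≠ 0 := hA.ne_zero
  constructor
  · rw [sq, ← mul_assoc, mul_comm (A⁻¹.submatrix (ends hn) (ends hn)).det A.det, key]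
  · have hadj : A.adjugate = A.det • A⁻¹ := by
      rw [Matrix.inv_def, smul_smul, Ring.inverse_eq_inv, mul_inv_cancel₀ hdet0,
        one_smul]
    rw [hadj]
    have : (A.det • A⁻¹).submatrix (ends hn) (ends hn) =
        A.det • (A⁻¹.submatrix (ends hn) (ends hn)) := rfl
    rw [this, Matrix.det_smul]
    simp only [Fintype.card_fin]
    rw [sq, mul_assoc, key]
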